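/- arXiv:math/0606141 — 2 statements merged into one kernel-verified Lean document; each statement's English description precedes it below -/
import Mathlib

section
/- Let a, b be integers with b ≠ 0 and let λ = a/b. Then for every (z, w₁, w₂) ∈ M_λ with w₁ ≠ 0 and w₂ ≠ 0, one has w₁^a·conj(w₂^b) = conj(w₁^a)·w₂^b (integer powers); that is, the meromorphic function w₁^a/w₂^b is real-valued on M_λ, so for rational λ the submanifold M_λ carries a nonconstant meromorphic function real-valued on it. -/
open Complex

/-- The submanifold `M_λ ⊆ ℂ³` defined by `conj w₁ = e^{i z conj z} w₁` and
`conj w₂ = e^{i λ z conj z} w₂`. -/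
def Mlam (lam : ℝ) : Set (ℂ × ℂ × ℂ) :=
  {p | (starRingEnd ℂ) p.2.1 = Complex.exp (Complex.I * p.1 * (starRingEnd ℂ) p.1) * p.2.1 ∧
       (starRingEnd ℂ) p.2.2 =
         Complex.exp (Complex.I * (lam : ℂ) * p.1 * (starRingEnd ℂ) p.1) * p.2.2}

/-- If `λ = a/b` is rational, then on `M_λ` (where `w₁ ≠ 0 ≠ w₂`)
one has `w₁^a · conj (w₂^b) = conj (w₁^a) · w₂^b`, i.e. the meromorphic function
`w₁^a / w₂^b` is real-valued on `M_λ`. -/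
theorem stmt5 (a b : ℤ) (hb : b ≠ 0) (lam : ℝ) (hlam : lam = (a : ℝ) / (b : ℝ))
    (z w₁ w₂ : ℂ) (h : (z, w₁, w₂) ∈ Mlam lam) (hw₁ : w₁ ≠ 0) (hw₂ : w₂ ≠ 0) :
    w₁ ^ a * (starRingEnd ℂ) (w₂ ^ b) = (starRingEnd ℂ) (w₁ ^ a) * w₂ ^ b := by
  obtain ⟨h1, h2⟩ := h
  rw [map_zpow₀, map_zpow₀, h1, h2, mul_zpow, mul_zpow]
  have hbl : (b : ℂ) * (lam : ℂ) = (a : ℂ) := by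
    have hb' : (b : ℂ) ≠ 0 := Int.cast_ne_zero.mpr hb
    push_cast [hlam]
    field_simp
  have hexp : Complex.exp (Complex.I * (lam : ℂ) * z * (starRingEnd ℂ) z) ^ b
      = Complex.exp (Complex.I * z * (starRingEnd ℂ) z) ^ a := by
    rw [← Complex.exp_int_mul, ← Complex.exp_int_mul]
    congr 1
    calc (b : ℂ) * (Complex.I * (lam : ℂ) * z * (starRingEnd ℂ) z)
        = ((b : ℂ) * (lam : ℂ)) * (Complex.I * z * (starRingEnd ℂ) z) := by ring
      _ = (a : ℂ) * (Complex.I * z * (starRingEnd ℂ) z) := by rw [hbl]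
  rw [hexp]; ring
end

section
/- Let r, m ≥ 1 be integers and let c > 0, δ > 0. Let X₁, …, X_m : ℝʳ → ℝʳ be C^∞ maps whose restrictions to the closed ball {x ∈ ℝʳ : |x| ≤ c} are linearly independent over ℝ, i.e., if a ∈ ℝᵐ and Σ_{j=1}^m a_j·X_j(x) = 0 for all |x| ≤ c, then a = 0. Let φ : ℝ × ℝʳ × ℝᵐ → ℝʳ be C^∞ on an open set containing D := {(t, x, y) : |t| ≤ 2, |x| ≤ c, |y| ≤ δ} and satisfy, for all (t, x, y) ∈ D, ∂φ/∂t(t, x, y) = Σ_{j=1}^m y_j·X_j(φ(t, x, y)) and φ(0, x, y) = x. Define the time-one map F(x, y) := φ(1, x, y). Then there exists γ with 0 < γ < δ such that for all y¹, y² ∈ ℝᵐ with |y¹| ≤ γ and |y²| ≤ γ: if F(x, y¹) = F(x, y²) for all |x| ≤ c, then y¹ = y². -/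
set_option maxHeartbeats 1000000

/-- **flow lemma.** Let `X₁,…,X_m : ℝʳ → ℝʳ` be smooth vector fields that are
linearly independent on the ball `{|x| ≤ c}`, and let `φ(t,x,y)` be the flow of
`y₁X₁ + ⋯ + y_mX_m`, smooth on an open set containing
`D = {|t| ≤ 2, |x| ≤ c, |y| ≤ δ}`.  For the time-one map `F(x,y) = φ(1,x,y)` there exists
`0 < γ < δ` such that if `|y¹|, |y²| ≤ γ` and `F(·,y¹) ≡ F(·,y²)` on `{|x| ≤ c}`,
then `y¹ = y²`. -/
theorem stmt12 (r m : ℕ) (hr : 1 ≤ r) (hm : 1 ≤ m) (c δ : ℝ) (hc : 0 < c) (hδ : 0 < δ)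
    (X : Fin m → EuclideanSpace ℝ (Fin r) → EuclideanSpace ℝ (Fin r))
    (hXsmooth : ∀ j, ContDiff ℝ (⊤ : ℕ∞) (X j))
    (hXindep : ∀ a : Fin m → ℝ,
      (∀ x : EuclideanSpace ℝ (Fin r), ‖x‖ ≤ c → ∑ j : Fin m, a j • X j x = 0) → a = 0)
    (φ : ℝ × EuclideanSpace ℝ (Fin r) × EuclideanSpace ℝ (Fin m) →
      EuclideanSpace ℝ (Fin r))
    (Ω : Set (ℝ × EuclideanSpace ℝ (Fin r) × EuclideanSpace ℝ (Fin m)))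
    (hΩopen : IsOpen Ω)
    (hΩD : {q : ℝ × EuclideanSpace ℝ (Fin r) × EuclideanSpace ℝ (Fin m) |
      |q.1| ≤ 2 ∧ ‖q.2.1‖ ≤ c ∧ ‖q.2.2‖ ≤ δ} ⊆ Ω)
    (hφsmooth : ContDiffOn ℝ (⊤ : ℕ∞) φ Ω)
    (hφode : ∀ (t : ℝ) (x : EuclideanSpace ℝ (Fin r)) (y : EuclideanSpace ℝ (Fin m)),
      |t| ≤ 2 → ‖x‖ ≤ c → ‖y‖ ≤ δ →
      HasDerivAt (fun s : ℝ => φ (s, x, y)) (∑ j : Fin m, y j • X j (φ (t, x, y))) t)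
    (hφ0 : ∀ (x : EuclideanSpace ℝ (Fin r)) (y : EuclideanSpace ℝ (Fin m)),
      ‖x‖ ≤ c → ‖y‖ ≤ δ → φ (0, x, y) = x) :
    ∃ γ : ℝ, 0 < γ ∧ γ < δ ∧
      ∀ y₁ y₂ : EuclideanSpace ℝ (Fin m), ‖y₁‖ ≤ γ → ‖y₂‖ ≤ γ →
        (∀ x : EuclideanSpace ℝ (Fin r), ‖x‖ ≤ c → φ (1, x, y₁) = φ (1, x, y₂)) →
        y₁ = y₂ := by
  classical
  -- coordinate bound in Euclidean space
  have hcoord : ∀ (a : EuclideanSpace ℝ (Fin m)) (j : Fin m), |a j| ≤ ‖a‖ := by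
    intro a j
    rw [EuclideanSpace.norm_eq]
    rw [show |a j| = Real.sqrt (‖a j‖ ^ 2) by
      rw [Real.sqrt_sq_eq_abs]; simp [Real.norm_eq_abs]]
    apply Real.sqrt_le_sqrt
    exact Finset.single_le_sum (f := fun i => ‖a i‖ ^ 2)
      (fun i _ => sq_nonneg _) (Finset.mem_univ j)
  -- the compact parameter box D
  set Dset : Set (ℝ × EuclideanSpace ℝ (Fin r) × EuclideanSpace ℝ (Fin m)) :=
    Set.Icc (-2 : ℝ) 2 ×ˢ (Metric.closedBall 0 c ×ˢ Metric.closedBall 0 δ) with hDset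
  have hDeq : {q : ℝ × EuclideanSpace ℝ (Fin r) × EuclideanSpace ℝ (Fin m) | |q.1| ≤ 2 ∧ ‖q.2.1‖ ≤ c ∧ ‖q.2.2‖ ≤ δ} = Dset := by
    ext ⟨t, x, y⟩
    simp [hDset, abs_le, Set.mem_Icc, Metric.mem_closedBall, dist_zero_right, and_assoc]
  have hDcompact : IsCompact Dset :=
    isCompact_Icc.prod ((isCompact_closedBall _ _).prod (isCompact_closedBall _ _))
  have hDΩ : Dset ⊆ Ω := by rw [← hDeq]; exact hΩD
  have hK0 : IsCompact (φ '' Dset) :=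
    hDcompact.image_of_continuousOn (hφsmooth.continuousOn.mono hDΩ)
  obtain ⟨ρ₀, hρ₀⟩ := hK0.isBounded.subset_closedBall 0
  set ρ := max ρ₀ c with hρ
  set B : Set (EuclideanSpace ℝ (Fin r)) := Metric.closedBall 0 ρ with hB
  have hcρ : c ≤ ρ := le_max_right _ _
  have hρ0 : (0 : ℝ) ≤ ρ := le_trans hc.le hcρ
  have hφB : ∀ q ∈ Dset, φ q ∈ B := by
    intro q hq
    have := hρ₀ (Set.mem_image_of_mem φ hq)
    exact Metric.closedBall_subset_closedBall (le_max_left _ _) this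
  have hxB : ∀ x : EuclideanSpace ℝ (Fin r), ‖x‖ ≤ c → x ∈ B := by
    intro x hx
    simp only [hB, Metric.mem_closedBall, dist_zero_right]
    exact le_trans hx hcρ
  -- the combined map g and bounds M, L
  have hgsmooth : ContDiff ℝ (⊤ : ℕ∞) (fun z (j : Fin m) => X j z) :=
    contDiff_pi.2 fun j => hXsmooth j
  have hBcompact : IsCompact B := isCompact_closedBall _ _
  obtain ⟨M₀, hM₀⟩ := hBcompact.exists_bound_of_continuousOn hgsmooth.continuous.continuousOn
  set M := max M₀ 0 with hM
  have hMnn : (0 : ℝ) ≤ M := le_max_right _ _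
  have hMX : ∀ (j : Fin m), ∀ z ∈ B, ‖X j z‖ ≤ M := by
    intro j z hz
    exact le_trans (norm_le_pi_norm ((fun z (j : Fin m) => X j z) z) j) (le_trans (hM₀ z hz) (le_max_left _ _))
  obtain ⟨L₀, hL₀⟩ := hBcompact.exists_bound_of_continuousOn
    (hgsmooth.continuous_fderiv (by simp)).continuousOn
  set L := max L₀ 1 with hL
  have hL1 : (1 : ℝ) ≤ L := le_max_right _ _
  have hLnn : (0 : ℝ) ≤ L := le_trans zero_le_one hL1
  have hLip : ∀ (j : Fin m), ∀ z₁ ∈ B, ∀ z₂ ∈ B, ‖X j z₁ - X j z₂‖ ≤ L * ‖z₁ - z₂‖ := by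
    intro j z₁ hz₁ z₂ hz₂
    have hgl : ‖(fun (j : Fin m) => X j z₁) - (fun (j : Fin m) => X j z₂)‖ ≤ L * ‖z₁ - z₂‖ := by
      have h := (convex_closedBall (0 : EuclideanSpace ℝ (Fin r)) ρ).norm_image_sub_le_of_norm_fderiv_le
        (f := fun z (j : Fin m) => X j z) (C := L)
        (fun z _ => (hgsmooth.differentiable (by simp)) z)
        (fun z hz => le_trans (hL₀ z hz) (le_max_left _ _)) hz₂ hz₁
      exact h
    exact le_trans (norm_le_pi_norm ((fun (j : Fin m) => X j z₁) - fun (j : Fin m) => X j z₂) j) hgl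
  -- generic sum bound
  have hsum : ∀ (a : EuclideanSpace ℝ (Fin m)) (v : Fin m → EuclideanSpace ℝ (Fin r)) (Mv : ℝ), (∀ j, ‖v j‖ ≤ Mv) →
      ‖∑ j : Fin m, a j • v j‖ ≤ m * Mv * ‖a‖ := by
    intro a v Mv hv
    calc ‖∑ j : Fin m, a j • v j‖ ≤ ∑ j : Fin m, ‖a j • v j‖ := norm_sum_le _ _
      _ = ∑ j : Fin m, |a j| * ‖v j‖ := by
          simp [norm_smul, Real.norm_eq_abs]
      _ ≤ ∑ _j : Fin m, ‖a‖ * Mv := by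
          refine Finset.sum_le_sum fun j _ => ?_
          exact mul_le_mul (hcoord a j) (hv j) (norm_nonneg _) (norm_nonneg _)
      _ = m * Mv * ‖a‖ := by
          simp [Finset.sum_const, Finset.card_univ]; ring
  -- Gronwall constants
  set K := (m : ℝ) * δ * L with hK
  have hKpos : 0 < K := by
    have hm' : (0 : ℝ) < m := by exact_mod_cast hm
    have hL' : (0 : ℝ) < L := lt_of_lt_of_le zero_lt_one hL1
    positivity
  set C₂ := (m : ℝ) * M * (Real.exp K - 1) / K with hC₂
  have hexpK : (1 : ℝ) ≤ Real.exp K := by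
    rw [show (1:ℝ) = Real.exp 0 by simp]
    exact Real.exp_le_exp.2 hKpos.le
  have hC₂nn : 0 ≤ C₂ := by
    apply div_nonneg _ hKpos.le
    have h1 : (0:ℝ) ≤ Real.exp K - 1 := by linarith
    positivity
  set C₃ := (m : ℝ) * L * ((m : ℝ) * M) + (m : ℝ) * L * C₂ with hC₃
  have hC₃nn : 0 ≤ C₃ := by positivity
  -- the linear map into continuous functions
  haveI : CompactSpace (Metric.closedBall (0 : EuclideanSpace ℝ (Fin r)) c) :=
    isCompact_iff_compactSpace.mp (isCompact_closedBall _ _)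
  set T : EuclideanSpace ℝ (Fin m) →ₗ[ℝ] C(Metric.closedBall (0 : EuclideanSpace ℝ (Fin r)) c, EuclideanSpace ℝ (Fin r)) :=
    { toFun := fun a => ⟨fun z => ∑ j : Fin m, a j • X j z.1, by
        refine continuous_finset_sum _ fun j _ => ?_
        exact Continuous.smul (f := fun _ => a j) (g := fun z : Metric.closedBall (0 : EuclideanSpace ℝ (Fin r)) c => X j z.1) continuous_const
          ((hXsmooth j).continuous.comp continuous_subtype_val)⟩
      map_add' := by
        intro a b
        refine ContinuousMap.ext fun z => ?_
        show ∑ j : Fin m, (a + b) j • X j z.1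
            = (∑ j : Fin m, a j • X j z.1) + ∑ j : Fin m, b j • X j z.1
        rw [← Finset.sum_add_distrib]
        refine Finset.sum_congr rfl fun j _ => ?_
        rw [PiLp.add_apply, add_smul]
      map_smul' := by
        intro s a
        refine ContinuousMap.ext fun z => ?_
        show ∑ j : Fin m, (s • a) j • X j z.1 = s • ∑ j : Fin m, a j • X j z.1
        rw [Finset.smul_sum]
        refine Finset.sum_congr rfl fun j _ => ?_
        rw [PiLp.smul_apply, smul_smul]
        rfl } with hT
  have hker : LinearMap.ker T = ⊥ := by
    rw [LinearMap.ker_eq_bot']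
    intro a ha
    have h0 : ∀ x : EuclideanSpace ℝ (Fin r), ‖x‖ ≤ c → ∑ j : Fin m, a j • X j x = 0 := by
      intro x hx
      have hmem : x ∈ Metric.closedBall (0 : EuclideanSpace ℝ (Fin r)) c := by
        simp [Metric.mem_closedBall, dist_zero_right, hx]
      have h1 : T a ⟨x, hmem⟩ = (0 : C(Metric.closedBall (0 : EuclideanSpace ℝ (Fin r)) c, EuclideanSpace ℝ (Fin r))) ⟨x, hmem⟩ := by
        rw [ha]
      exact h1
    exact WithLp.ofLp_injective 2 (hXindep a.ofLp h0)
  obtain ⟨Ka, hKa0, hKa⟩ := T.exists_antilipschitzWith hker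
  -- choose γ
  set γ := min (δ / 2) (1 / (2 * ((Ka : ℝ) * C₃ + 1))) with hγ
  have hKaC : (0 : ℝ) < (Ka : ℝ) * C₃ + 1 := by positivity
  have hγpos : 0 < γ := by
    apply lt_min (by linarith)
    positivity
  have hγδ : γ < δ := lt_of_le_of_lt (min_le_left _ _) (by linarith)
  refine ⟨γ, hγpos, hγδ, ?_⟩
  intro y₁ y₂ hy₁ hy₂ heq
  have hy₁δ : ‖y₁‖ ≤ δ := le_trans hy₁ hγδ.le
  have hy₂δ : ‖y₂‖ ≤ δ := le_trans hy₂ hγδ.le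
  set a : EuclideanSpace ℝ (Fin m) := y₁ - y₂ with haa
  have haj : ∀ j : Fin m, a j = y₁ j - y₂ j := fun j => rfl
  -- key estimate for each x
  have key : ∀ x : EuclideanSpace ℝ (Fin r), ‖x‖ ≤ c → ‖∑ j : Fin m, a j • X j x‖ ≤ γ * C₃ * ‖a‖ := by
    intro x hx
    have habs : ∀ t : ℝ, t ∈ Set.Icc (0:ℝ) 1 → |t| ≤ 2 := by
      intro t ht
      rw [abs_le]; exact ⟨by linarith [ht.1], by linarith [ht.2]⟩
    have hmemD : ∀ (y : EuclideanSpace ℝ (Fin m)), ‖y‖ ≤ δ → ∀ t ∈ Set.Icc (0:ℝ) 1, φ (t, x, y) ∈ B := by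
      intro y hy t ht
      apply hφB
      simp only [hDset, Set.mem_prod, Set.mem_Icc, Metric.mem_closedBall, dist_zero_right]
      exact ⟨⟨by linarith [ht.1], by linarith [ht.2]⟩, hx, hy⟩
    -- step (b): displacement bound
    have hb : ∀ (y : EuclideanSpace ℝ (Fin m)), ‖y‖ ≤ δ → ∀ t ∈ Set.Icc (0:ℝ) 1,
        ‖φ (t, x, y) - x‖ ≤ m * M * ‖y‖ := by
      intro y hy t ht
      have hbound : ∀ s ∈ Set.Icc (0:ℝ) 1,
          ‖∑ j : Fin m, y j • X j (φ (s, x, y))‖ ≤ m * M * ‖y‖ := by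
        intro s hs
        exact hsum y _ M (fun j => hMX j _ (hmemD y hy s hs))
      have hmv := (convex_Icc (0:ℝ) 1).norm_image_sub_le_of_norm_hasDerivWithin_le
        (f := fun s => φ (s, x, y))
        (f' := fun s => ∑ j : Fin m, y j • X j (φ (s, x, y)))
        (fun s hs => (hφode s x y (habs s hs) hx hy).hasDerivWithinAt)
        hbound (Set.left_mem_Icc.2 zero_le_one) ht
      simp only [hφ0 x y hx hy] at hmv
      have ht1 : ‖t - 0‖ ≤ 1 := by
        rw [sub_zero, Real.norm_eq_abs, abs_of_nonneg ht.1]; exact ht.2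
      have hCnn : 0 ≤ (m:ℝ) * M * ‖y‖ := by positivity
      calc ‖φ (t, x, y) - x‖ ≤ m * M * ‖y‖ * ‖t - 0‖ := hmv
        _ ≤ m * M * ‖y‖ * 1 := mul_le_mul_of_nonneg_left ht1 hCnn
        _ = m * M * ‖y‖ := by ring
    -- step (c): Gronwall comparison of the two flows
    set f : ℝ → EuclideanSpace ℝ (Fin r) := fun t => φ (t, x, y₁) - φ (t, x, y₂) with hf
    have hfderiv : ∀ t ∈ Set.Icc (0:ℝ) 1, HasDerivAt f
        ((∑ j : Fin m, a j • X j (φ (t, x, y₁))) +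
          ∑ j : Fin m, y₂ j • (X j (φ (t, x, y₁)) - X j (φ (t, x, y₂)))) t := by
      intro t ht
      have h1 := hφode t x y₁ (habs t ht) hx hy₁δ
      have h2 := hφode t x y₂ (habs t ht) hx hy₂δ
      refine (h1.sub h2).congr_deriv ?_
      rw [← Finset.sum_sub_distrib, ← Finset.sum_add_distrib]
      refine Finset.sum_congr rfl fun j _ => ?_
      rw [haj j, sub_smul, smul_sub]
      abel
    have hfbound : ∀ t ∈ Set.Ico (0:ℝ) 1,
        ‖(∑ j : Fin m, a j • X j (φ (t, x, y₁))) +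
          ∑ j : Fin m, y₂ j • (X j (φ (t, x, y₁)) - X j (φ (t, x, y₂)))‖
          ≤ K * ‖f t‖ + (m : ℝ) * M * ‖a‖ := by
      intro t ht
      have ht' : t ∈ Set.Icc (0:ℝ) 1 := ⟨ht.1, ht.2.le⟩
      have hb1 : ‖∑ j : Fin m, a j • X j (φ (t, x, y₁))‖ ≤ m * M * ‖a‖ :=
        hsum a _ M (fun j => hMX j _ (hmemD y₁ hy₁δ t ht'))
      have hb2 : ‖∑ j : Fin m, y₂ j • (X j (φ (t, x, y₁)) - X j (φ (t, x, y₂)))‖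
          ≤ m * (L * ‖f t‖) * ‖y₂‖ := by
        refine hsum y₂ _ (L * ‖f t‖) fun j => ?_
        exact hLip j _ (hmemD y₁ hy₁δ t ht') _ (hmemD y₂ hy₂δ t ht')
      have hb2' : (m:ℝ) * (L * ‖f t‖) * ‖y₂‖ ≤ K * ‖f t‖ := by
        rw [hK]
        have h1 : (m:ℝ) * (L * ‖f t‖) * ‖y₂‖ ≤ (m:ℝ) * (L * ‖f t‖) * δ := by
          apply mul_le_mul_of_nonneg_left hy₂δ
          positivity
        calc (m:ℝ) * (L * ‖f t‖) * ‖y₂‖ ≤ (m:ℝ) * (L * ‖f t‖) * δ := h1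
          _ = (m:ℝ) * δ * L * ‖f t‖ := by ring
      calc ‖(∑ j : Fin m, a j • X j (φ (t, x, y₁))) +
          ∑ j : Fin m, y₂ j • (X j (φ (t, x, y₁)) - X j (φ (t, x, y₂)))‖
          ≤ ‖∑ j : Fin m, a j • X j (φ (t, x, y₁))‖ +
            ‖∑ j : Fin m, y₂ j • (X j (φ (t, x, y₁)) - X j (φ (t, x, y₂)))‖ := norm_add_le _ _
        _ ≤ (m:ℝ) * M * ‖a‖ + K * ‖f t‖ := by
            have h3 := le_trans hb2 hb2'
            linarith
        _ = K * ‖f t‖ + (m : ℝ) * M * ‖a‖ := by ring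
    have hf0 : ‖f 0‖ ≤ 0 := by
      simp [hf, hφ0 x y₁ hx hy₁δ, hφ0 x y₂ hx hy₂δ]
    have hgron := norm_le_gronwallBound_of_norm_deriv_right_le
      (f := f)
      (f' := fun t => (∑ j : Fin m, a j • X j (φ (t, x, y₁))) +
        ∑ j : Fin m, y₂ j • (X j (φ (t, x, y₁)) - X j (φ (t, x, y₂))))
      (a := 0) (b := 1)
      (fun t ht => ((hfderiv t ht).continuousAt).continuousWithinAt)
      (fun t ht => ((hfderiv t ⟨ht.1, ht.2.le⟩).hasDerivWithinAt))
      hf0 hfbound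
    have hcc : ∀ t ∈ Set.Icc (0:ℝ) 1, ‖f t‖ ≤ C₂ * ‖a‖ := by
      intro t ht
      have hg1 := hgron t ht
      rw [gronwallBound_of_K_ne_0 hKpos.ne'] at hg1
      have hmono : Real.exp (K * (t - 0)) ≤ Real.exp K := by
        apply Real.exp_le_exp.2
        rw [sub_zero]
        nlinarith [ht.1, ht.2, hKpos.le]
      have hεnn : 0 ≤ (m:ℝ) * M * ‖a‖ / K := by positivity
      calc ‖f t‖ ≤ 0 * Real.exp (K * (t - 0)) +
            (m:ℝ) * M * ‖a‖ / K * (Real.exp (K * (t - 0)) - 1) := hg1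
        _ = (m:ℝ) * M * ‖a‖ / K * (Real.exp (K * (t - 0)) - 1) := by ring
        _ ≤ (m:ℝ) * M * ‖a‖ / K * (Real.exp K - 1) := by
            apply mul_le_mul_of_nonneg_left _ hεnn
            linarith
        _ = C₂ * ‖a‖ := by rw [hC₂]; ring
    -- step (d): mean value for the corrected difference
    set w : EuclideanSpace ℝ (Fin r) := ∑ j : Fin m, a j • X j x with hw
    set G : ℝ → EuclideanSpace ℝ (Fin r) := fun t => φ (t, x, y₁) - φ (t, x, y₂) - t • w with hG
    have hGderiv : ∀ t ∈ Set.Icc (0:ℝ) 1, HasDerivAt G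
        (((∑ j : Fin m, a j • X j (φ (t, x, y₁))) +
          ∑ j : Fin m, y₂ j • (X j (φ (t, x, y₁)) - X j (φ (t, x, y₂)))) - w) t := by
      intro t ht
      have hsmul : HasDerivAt (fun s : ℝ => s • w) w t := by
        simpa using (hasDerivAt_id t).smul_const w
      exact (hfderiv t ht).sub hsmul
    have hGbound : ∀ t ∈ Set.Icc (0:ℝ) 1,
        ‖((∑ j : Fin m, a j • X j (φ (t, x, y₁))) +
          ∑ j : Fin m, y₂ j • (X j (φ (t, x, y₁)) - X j (φ (t, x, y₂)))) - w‖
          ≤ γ * C₃ * ‖a‖ := by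
      intro t ht
      have hident :
          ((∑ j : Fin m, a j • X j (φ (t, x, y₁))) +
            ∑ j : Fin m, y₂ j • (X j (φ (t, x, y₁)) - X j (φ (t, x, y₂)))) - w
          = (∑ j : Fin m, a j • (X j (φ (t, x, y₁)) - X j x)) +
            ∑ j : Fin m, y₂ j • (X j (φ (t, x, y₁)) - X j (φ (t, x, y₂))) := by
        have h7 : (∑ j : Fin m, a j • (X j (φ (t, x, y₁)) - X j x))
            = (∑ j : Fin m, a j • X j (φ (t, x, y₁))) - ∑ j : Fin m, a j • X j x := by
          rw [← Finset.sum_sub_distrib]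
          exact Finset.sum_congr rfl fun j _ => smul_sub _ _ _
        rw [hw, h7]
        abel
      rw [hident]
      have hb1 : ‖∑ j : Fin m, a j • (X j (φ (t, x, y₁)) - X j x)‖
          ≤ m * (L * ((m:ℝ) * M * γ)) * ‖a‖ := by
        refine hsum a _ (L * ((m:ℝ) * M * γ)) fun j => ?_
        have hlip := hLip j _ (hmemD y₁ hy₁δ t ht) _ (hxB x hx)
        refine le_trans hlip ?_
        apply mul_le_mul_of_nonneg_left _ hLnn
        refine le_trans (hb y₁ hy₁δ t ht) ?_
        exact mul_le_mul_of_nonneg_left hy₁ (by positivity)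
      have hb2 : ‖∑ j : Fin m, y₂ j • (X j (φ (t, x, y₁)) - X j (φ (t, x, y₂)))‖
          ≤ m * (L * (C₂ * ‖a‖)) * ‖y₂‖ := by
        refine hsum y₂ _ (L * (C₂ * ‖a‖)) fun j => ?_
        have hlip := hLip j _ (hmemD y₁ hy₁δ t ht) _ (hmemD y₂ hy₂δ t ht)
        refine le_trans hlip ?_
        exact mul_le_mul_of_nonneg_left (hcc t ht) hLnn
      have hy₂γ : (m:ℝ) * (L * (C₂ * ‖a‖)) * ‖y₂‖ ≤ (m:ℝ) * (L * (C₂ * ‖a‖)) * γ :=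
        mul_le_mul_of_nonneg_left hy₂ (by positivity)
      calc ‖(∑ j : Fin m, a j • (X j (φ (t, x, y₁)) - X j x)) +
            ∑ j : Fin m, y₂ j • (X j (φ (t, x, y₁)) - X j (φ (t, x, y₂)))‖
          ≤ ‖∑ j : Fin m, a j • (X j (φ (t, x, y₁)) - X j x)‖ +
            ‖∑ j : Fin m, y₂ j • (X j (φ (t, x, y₁)) - X j (φ (t, x, y₂)))‖ := norm_add_le _ _
        _ ≤ m * (L * ((m:ℝ) * M * γ)) * ‖a‖ + (m:ℝ) * (L * (C₂ * ‖a‖)) * γ := by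
            have h4 := le_trans hb2 hy₂γ
            linarith
        _ = γ * C₃ * ‖a‖ := by rw [hC₃]; ring
    have hmvG := (convex_Icc (0:ℝ) 1).norm_image_sub_le_of_norm_hasDerivWithin_le
      (f := G)
      (f' := fun t => ((∑ j : Fin m, a j • X j (φ (t, x, y₁))) +
        ∑ j : Fin m, y₂ j • (X j (φ (t, x, y₁)) - X j (φ (t, x, y₂)))) - w)
      (fun t ht => (hGderiv t ht).hasDerivWithinAt)
      hGbound (Set.left_mem_Icc.2 zero_le_one) (Set.right_mem_Icc.2 zero_le_one)
    have hG0 : G 0 = 0 := by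
      simp [hG, hφ0 x y₁ hx hy₁δ, hφ0 x y₂ hx hy₂δ]
    have hG1 : G 1 = -w := by
      simp [hG, heq x hx]
    rw [hG1, hG0, sub_zero] at hmvG
    simpa [hw, norm_neg] using le_trans hmvG (by
      rw [show ‖(1:ℝ) - 0‖ = 1 by norm_num]
      rw [mul_one])
  -- conclude using the antilipschitz bound
  have hTa : ‖T a‖ ≤ γ * C₃ * ‖a‖ := by
    rw [ContinuousMap.norm_le _ (by positivity)]
    intro z
    refine key z.1 ?_
    have hz2 := z.2
    rwa [Metric.mem_closedBall, dist_zero_right] at hz2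
  have hanti : ‖a‖ ≤ (Ka : ℝ) * ‖T a‖ := by
    have := hKa.le_mul_dist a 0
    simpa [map_zero, dist_zero_right] using this
  have hγ2 : γ ≤ 1 / (2 * ((Ka : ℝ) * C₃ + 1)) := min_le_right _ _
  have ha0 : ‖a‖ = 0 := by
    by_contra hne
    have hapos : 0 < ‖a‖ := lt_of_le_of_ne (norm_nonneg a) (Ne.symm hne)
    have h5 : ‖a‖ ≤ (Ka : ℝ) * (γ * C₃ * ‖a‖) :=
      le_trans hanti (mul_le_mul_of_nonneg_left hTa Ka.coe_nonneg)
    have h6 : γ * (2 * ((Ka : ℝ) * C₃ + 1)) ≤ 1 :=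
      (le_div_iff₀ (by positivity)).mp hγ2
    nlinarith [hapos, Ka.coe_nonneg, hC₃nn, hγpos]
  have : a = 0 := norm_eq_zero.mp ha0
  exact sub_eq_zero.mp this
end
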